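/- Let G be a nonzero subrectangular nonnegative s×s matrix with G_{11} > 0. Then there is a sequence of positive scalars s_n such that G^n / s_n converges to a rank-one nonnegative matrix. -/

import Mathlib

open Filter

section PerronAux
open Filter Matrix

lemma aux_nonneg {m : ℕ} {G : Matrix (Fin (m + 1)) (Fin (m + 1)) ℝ}
    (hG : ∀ i j, 0 ≤ G i j) : ∀ n i j, 0 ≤ (G ^ n) i j := by
  intro n
  induction n with
  | zero => intro i j; rw [pow_zero]; by_cases h : i = j <;> simp [Matrix.one_apply, h]
  | succ n ih =>
    intro i j
    rw [pow_succ, Matrix.mul_apply]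
    exact Finset.sum_nonneg fun k _ => mul_nonneg (ih i k) (hG k j)

lemma aux_pos {m : ℕ} {G : Matrix (Fin (m + 1)) (Fin (m + 1)) ℝ} {R C : Set (Fin (m + 1))}
    (hsupp : ∀ i j, 0 < G i j ↔ i ∈ R ∧ j ∈ C) (hG : ∀ i j, 0 ≤ G i j)
    (hR0 : (0 : Fin (m + 1)) ∈ R) (hC0 : (0 : Fin (m + 1)) ∈ C) :
    ∀ n, ∀ i ∈ R, ∀ j ∈ C, 0 < (G ^ (n + 1)) i j := by
  intro n
  induction n with
  | zero => intro i hi j hj; simpa using (hsupp i j).2 ⟨hi, hj⟩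
  | succ n ih =>
    intro i hi j hj
    rw [pow_succ, Matrix.mul_apply]
    refine Finset.sum_pos' (fun k _ => mul_nonneg (aux_nonneg hG _ i k) (hG k j))
      ⟨0, Finset.mem_univ 0, mul_pos (ih i hi 0 hC0) ((hsupp 0 j).2 ⟨hR0, hj⟩)⟩

lemma aux_zero {m : ℕ} {G : Matrix (Fin (m + 1)) (Fin (m + 1)) ℝ} {R C : Set (Fin (m + 1))}
    (hsupp : ∀ i j, 0 < G i j ↔ i ∈ R ∧ j ∈ C) (hG : ∀ i j, 0 ≤ G i j) :
    ∀ k j, j ∉ C → G k j = 0 := by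
  intro k j hj
  rcases (hG k j).lt_or_eq with h | h
  · exact absurd ((hsupp k j).1 h).2 hj
  · exact h.symm

lemma aux_colzero {m : ℕ} {G : Matrix (Fin (m + 1)) (Fin (m + 1)) ℝ} {R C : Set (Fin (m + 1))}
    (hsupp : ∀ i j, 0 < G i j ↔ i ∈ R ∧ j ∈ C) (hG : ∀ i j, 0 ≤ G i j) :
    ∀ n i j, j ∉ C → (G ^ (n + 1)) i j = 0 := by
  intro n i j hj
  rw [pow_succ, Matrix.mul_apply]
  exact Finset.sum_eq_zero fun k _ => by rw [aux_zero hsupp hG k j hj, mul_zero]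

lemma key {m : ℕ} (G : Matrix (Fin (m + 1)) (Fin (m + 1)) ℝ)
    (hG : ∀ i j, 0 ≤ G i j) (R C : Set (Fin (m + 1)))
    (hsupp : ∀ i j, 0 < G i j ↔ i ∈ R ∧ j ∈ C)
    (hR0 : (0 : Fin (m + 1)) ∈ R) (hC0 : (0 : Fin (m + 1)) ∈ C) (i : Fin (m + 1)) :
    ∃ u : ℝ, 0 ≤ u ∧ ∀ j ∈ C,
      Tendsto (fun n => (G ^ (n + 1)) i j / (G ^ (n + 1)) 0 j) atTop (nhds u) := by
  classical
  set Cf : Finset (Fin (m + 1)) := Finset.univ.filter (· ∈ C) with hCfdef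
  set Rf : Finset (Fin (m + 1)) := Finset.univ.filter (· ∈ R) with hRfdef
  have hmemC : ∀ j, j ∈ Cf ↔ j ∈ C := fun j => by simp [hCfdef]
  have hmemR : ∀ t, t ∈ Rf ↔ t ∈ R := fun t => by simp [hRfdef]
  have hCne : Cf.Nonempty := ⟨0, (hmemC 0).2 hC0⟩
  have hRne : Rf.Nonempty := ⟨0, (hmemR 0).2 hR0⟩
  -- constants
  set b : ℝ := (∑ k, ∑ l, G k l) + 1 with hbdef
  have hble : ∀ k l, G k l ≤ b := by
    intro k l
    have h1 : G k l ≤ ∑ l', G k l' :=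
      Finset.single_le_sum (fun l' _ => hG k l') (Finset.mem_univ l)
    have h2 : (∑ l', G k l') ≤ ∑ k', ∑ l', G k' l' :=
      Finset.single_le_sum (fun k' _ => Finset.sum_nonneg fun l' _ => hG k' l')
        (Finset.mem_univ k)
    simp only [hbdef]; linarith
  have hbpos : 0 < b := by
    have : (0:ℝ) ≤ ∑ k, ∑ l, G k l :=
      Finset.sum_nonneg fun k _ => Finset.sum_nonneg fun l _ => hG k l
    simp only [hbdef]; linarith
  set a0 : ℝ := Rf.inf' hRne (fun t => G t 0) with ha0def
  have ha0le : ∀ t ∈ R, a0 ≤ G t 0 := fun t ht => Finset.inf'_le _ ((hmemR t).2 ht)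
  have ha0pos : 0 < a0 :=
    (Finset.lt_inf'_iff hRne).2 fun t ht => (hsupp t 0).2 ⟨(hmemR t).1 ht, hC0⟩
  set a1 : ℝ := Cf.inf' hCne (fun j => G 0 j) with ha1def
  have ha1le : ∀ j ∈ C, a1 ≤ G 0 j := fun j hj => Finset.inf'_le _ ((hmemC j).2 hj)
  have ha1pos : 0 < a1 :=
    (Finset.lt_inf'_iff hCne).2 fun j hj => (hsupp 0 j).2 ⟨hR0, (hmemC j).1 hj⟩
  set δ : ℝ := (a0 * a1) / ((m + 1 : ℝ) * b * b) with hδdef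
  have hmpos : (0:ℝ) < (m + 1 : ℝ) := by positivity
  have hδpos : 0 < δ := by rw [hδdef]; positivity
  -- pointwise comparison
  have hBkey : ∀ t k, a0 * G t k ≤ b * G t 0 := by
    intro t k
    by_cases ht : t ∈ R
    · exact (mul_le_mul (ha0le t ht) (hble t k) (hG t k) (hG t 0)).trans_eq (mul_comm _ _)
    · have h0 : G t k = 0 := by
        rcases (hG t k).lt_or_eq with h | h
        · exact absurd ((hsupp t k).1 h).1 ht
        · exact h.symm
      rw [h0, mul_zero]
      exact mul_nonneg hbpos.le (hG t 0)
  -- uniform row-ratio bound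
  have hrat : ∀ n k, a0 * (G ^ (n + 1)) 0 k ≤ b * (G ^ (n + 1)) 0 0 := by
    intro n k
    simp only [pow_succ, Matrix.mul_apply, Finset.mul_sum]
    refine Finset.sum_le_sum fun t _ => ?_
    have h1 := hBkey t k
    have h2 : 0 ≤ (G ^ n) 0 t := aux_nonneg hG n 0 t
    calc a0 * ((G ^ n) 0 t * G t k) = (G ^ n) 0 t * (a0 * G t k) := by ring
      _ ≤ (G ^ n) 0 t * (b * G t 0) := mul_le_mul_of_nonneg_left h1 h2
      _ = b * ((G ^ n) 0 t * G t 0) := by ring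
  -- weight bound
  have hdW : ∀ n, ∀ j ∈ C, δ * (G ^ (n + 2)) 0 j ≤ (G ^ (n + 1)) 0 0 * G 0 j := by
    intro n j hj
    have hsum : a0 * (G ^ (n + 2)) 0 j ≤ (m + 1 : ℝ) * (b * (G ^ (n + 1)) 0 0 * b) := by
      have h1 : (G ^ (n + 2)) 0 j = ∑ k, (G ^ (n + 1)) 0 k * G k j := by
        rw [pow_succ, Matrix.mul_apply]
      rw [h1, Finset.mul_sum]
      have h2 : ∀ k ∈ (Finset.univ : Finset (Fin (m + 1))),
          a0 * ((G ^ (n + 1)) 0 k * G k j) ≤ b * (G ^ (n + 1)) 0 0 * b := by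
        intro k _
        have h3 : a0 * ((G ^ (n + 1)) 0 k * G k j) = (a0 * (G ^ (n + 1)) 0 k) * G k j := by ring
        rw [h3]
        exact mul_le_mul (hrat n k) (hble k j) (hG k j)
          (mul_nonneg hbpos.le (aux_nonneg hG _ 0 0))
      calc (∑ k, a0 * ((G ^ (n + 1)) 0 k * G k j))
          ≤ (Finset.univ : Finset (Fin (m + 1))).card • (b * (G ^ (n + 1)) 0 0 * b) :=
            Finset.sum_le_card_nsmul _ _ _ h2
        _ = (m + 1 : ℝ) * (b * (G ^ (n + 1)) 0 0 * b) := by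
            simp [nsmul_eq_mul]
    have hkey : δ * (G ^ (n + 2)) 0 j ≤ a1 * (G ^ (n + 1)) 0 0 := by
      rw [hδdef, div_mul_eq_mul_div, div_le_iff₀ (by positivity : (0:ℝ) < (m + 1 : ℝ) * b * b)]
      calc a0 * a1 * (G ^ (n + 2)) 0 j = a1 * (a0 * (G ^ (n + 2)) 0 j) := by ring
        _ ≤ a1 * ((m + 1 : ℝ) * (b * (G ^ (n + 1)) 0 0 * b)) :=
            mul_le_mul_of_nonneg_left hsum ha1pos.le
        _ = a1 * (G ^ (n + 1)) 0 0 * ((m + 1 : ℝ) * b * b) := by ring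
    refine hkey.trans ?_
    have := mul_le_mul_of_nonneg_right (ha1le j hj) (aux_nonneg hG (n + 1) 0 0)
    linarith [this]
  -- ratios
  set r : ℕ → Fin (m + 1) → ℝ := fun n k => (G ^ (n + 1)) i k / (G ^ (n + 1)) 0 k with hrdef
  have hrnn : ∀ n k, 0 ≤ r n k := fun n k =>
    div_nonneg (aux_nonneg hG _ i k) (aux_nonneg hG _ 0 k)
  have hI : ∀ n k, (G ^ (n + 1)) i k = r n k * (G ^ (n + 1)) 0 k := by
    intro n k
    by_cases hk : k ∈ C
    · have h0 : (G ^ (n + 1)) 0 k ≠ 0 := (aux_pos hsupp hG hR0 hC0 n 0 hR0 k hk).ne'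
      simp only [hrdef]
      rw [div_mul_cancel₀ _ h0]
    · have h1 : (G ^ (n + 1)) i k = 0 := aux_colzero hsupp hG n i k hk
      have h2 : (G ^ (n + 1)) 0 k = 0 := aux_colzero hsupp hG n 0 k hk
      simp [hrdef, h1, h2]
  set M : ℕ → ℝ := fun n => Cf.sup' hCne (r n) with hMdef
  set mm : ℕ → ℝ := fun n => Cf.inf' hCne (r n) with hmmdef
  have hrM : ∀ n, ∀ j ∈ C, r n j ≤ M n := fun n j hj =>
    Finset.le_sup' (r n) ((hmemC j).2 hj)
  have hmr : ∀ n, ∀ j ∈ C, mm n ≤ r n j := fun n j hj =>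
    Finset.inf'_le (r n) ((hmemC j).2 hj)
  have hmmnn : ∀ n, 0 ≤ mm n := fun n =>
    Finset.le_inf' hCne _ fun j _ => hrnn n j
  -- δ ≤ 1
  have hδ1 : δ ≤ 1 := by
    have hW : 0 < (G ^ (0 + 2)) 0 0 := aux_pos hsupp hG hR0 hC0 1 0 hR0 0 hC0
    have h1 := hdW 0 0 hC0
    have h2 : (G ^ (0 + 1)) 0 0 * G 0 0 ≤ (G ^ (0 + 2)) 0 0 := by
      conv_rhs => rw [pow_succ, Matrix.mul_apply]
      exact Finset.single_le_sum
        (fun k _ => mul_nonneg (aux_nonneg hG _ 0 k) (hG k 0)) (Finset.mem_univ 0)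
    nlinarith
  -- main contraction step
  have step : ∀ n, ∀ j ∈ C,
      δ * r n 0 + (1 - δ) * mm n ≤ r (n + 1) j ∧
      r (n + 1) j ≤ δ * r n 0 + (1 - δ) * M n := by
    intro n j hj
    have hW : 0 < (G ^ (n + 2)) 0 j := aux_pos hsupp hG hR0 hC0 (n + 1) 0 hR0 j hj
    set w : Fin (m + 1) → ℝ := fun k => (G ^ (n + 1)) 0 k * G k j with hwdef
    have hwnn : ∀ k, 0 ≤ w k := fun k => mul_nonneg (aux_nonneg hG _ 0 k) (hG k j)
    have hWsum : (G ^ (n + 2)) 0 j = ∑ k, w k := by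
      rw [pow_succ, Matrix.mul_apply]
    have hNsum : (G ^ (n + 2)) i j = ∑ k, r n k * w k := by
      rw [pow_succ, Matrix.mul_apply]
      refine Finset.sum_congr rfl fun k _ => ?_
      rw [hI n k]; simp only [hwdef]; ring
    have hw0 : δ * (G ^ (n + 2)) 0 j ≤ w 0 := hdW n j hj
    have hwle : w 0 ≤ (G ^ (n + 2)) 0 j := by
      rw [hWsum]
      exact Finset.single_le_sum (fun k _ => hwnn k) (Finset.mem_univ 0)
    have hsplitN : (G ^ (n + 2)) i j = r n 0 * w 0 + ∑ k ∈ Finset.univ.erase 0, r n k * w k := by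
      rw [hNsum, ← Finset.add_sum_erase _ _ (Finset.mem_univ 0)]
    have hsplitW : (∑ k ∈ Finset.univ.erase 0, w k) = (G ^ (n + 2)) 0 j - w 0 := by
      rw [hWsum, ← Finset.add_sum_erase _ w (Finset.mem_univ 0)]; ring
    have hker : ∀ k ∈ Finset.univ.erase 0, k ∉ C → w k = 0 := by
      intro k _ hk
      have : (G ^ (n + 1)) 0 k = 0 := aux_colzero hsupp hG n 0 k hk
      simp [hwdef, this]
    have hup : (G ^ (n + 2)) i j ≤ r n 0 * w 0 + M n * ((G ^ (n + 2)) 0 j - w 0) := by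
      rw [hsplitN, ← hsplitW, Finset.mul_sum]
      refine add_le_add_right (Finset.sum_le_sum fun k hk => ?_) _
      by_cases hkC : k ∈ C
      · exact mul_le_mul_of_nonneg_right (hrM n k hkC) (hwnn k)
      · rw [hker k hk hkC, mul_zero, mul_zero]
    have hlo : r n 0 * w 0 + mm n * ((G ^ (n + 2)) 0 j - w 0) ≤ (G ^ (n + 2)) i j := by
      rw [hsplitN, ← hsplitW, Finset.mul_sum]
      refine add_le_add_right (Finset.sum_le_sum fun k hk => ?_) _
      by_cases hkC : k ∈ C
      · exact mul_le_mul_of_nonneg_right (hmr n k hkC) (hwnn k)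
      · rw [hker k hk hkC, mul_zero, mul_zero]
    have hr0M : r n 0 ≤ M n := hrM n 0 hC0
    have hmr0 : mm n ≤ r n 0 := hmr n 0 hC0
    have hrval : r (n + 1) j = (G ^ (n + 2)) i j / (G ^ (n + 2)) 0 j := rfl
    constructor
    · rw [hrval, le_div_iff₀ hW]
      have h4 := mul_nonneg (sub_nonneg.2 hmr0) (sub_nonneg.2 hw0)
      linarith [h4, hlo]
    · rw [hrval, div_le_iff₀ hW]
      have h4 := mul_nonneg (sub_nonneg.2 hr0M) (sub_nonneg.2 hw0)
      linarith [h4, hup]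
  have hMstep : ∀ n, M (n + 1) ≤ δ * r n 0 + (1 - δ) * M n := by
    intro n
    refine Finset.sup'_le hCne _ fun j hj => (step n j ((hmemC j).1 hj)).2
  have hmstep : ∀ n, δ * r n 0 + (1 - δ) * mm n ≤ mm (n + 1) := by
    intro n
    refine Finset.le_inf' hCne _ fun j hj => (step n j ((hmemC j).1 hj)).1
  have hManti : ∀ n, M (n + 1) ≤ M n := by
    intro n
    have h1 := hMstep n
    have h2 := hrM n 0 hC0
    nlinarith [mul_nonneg hδpos.le (sub_nonneg.2 h2)]
  have hmmono : ∀ n, mm n ≤ mm (n + 1) := by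
    intro n
    have h1 := hmstep n
    have h2 := hmr n 0 hC0
    nlinarith [mul_nonneg hδpos.le (sub_nonneg.2 h2)]
  have hmM : ∀ n, mm n ≤ M n := fun n => (hmr n 0 hC0).trans (hrM n 0 hC0)
  have hgap : ∀ n, M n - mm n ≤ (1 - δ) ^ n * (M 0 - mm 0) := by
    intro n
    induction n with
    | zero => simp
    | succ n ih =>
      have h1 := hMstep n
      have h2 := hmstep n
      have h3 := mul_le_mul_of_nonneg_left ih (sub_nonneg.2 hδ1)
      have h4 : (1 - δ) * ((1 - δ) ^ n * (M 0 - mm 0)) = (1 - δ) ^ (n + 1) * (M 0 - mm 0) := by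
        ring
      linarith
  have hgap0 : Tendsto (fun n => M n - mm n) atTop (nhds 0) := by
    have hpow : Tendsto (fun n : ℕ => (1 - δ) ^ n * (M 0 - mm 0)) atTop (nhds 0) := by
      have := (tendsto_pow_atTop_nhds_zero_of_lt_one (sub_nonneg.2 hδ1)
        (by linarith : 1 - δ < 1)).mul_const (M 0 - mm 0)
      rw [zero_mul] at this
      exact this
    exact squeeze_zero (fun n => sub_nonneg.2 (hmM n)) hgap hpow
  have hMbdd : BddBelow (Set.range M) := by
    refine ⟨mm 0, ?_⟩
    rintro x ⟨n, rfl⟩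
    exact (monotone_nat_of_le_succ hmmono (Nat.zero_le n)).trans (hmM n)
  have hMconv : Tendsto M atTop (nhds (⨅ n, M n)) :=
    tendsto_atTop_ciInf (antitone_nat_of_succ_le hManti) hMbdd
  set u : ℝ := ⨅ n, M n with hudef
  have hmmconv : Tendsto mm atTop (nhds u) := by
    have h := hMconv.sub hgap0
    rw [sub_zero] at h
    exact h.congr fun n => by ring
  refine ⟨u, ?_, ?_⟩
  · exact le_of_tendsto_of_tendsto' tendsto_const_nhds hmmconv fun n => hmmnn n
  · intro j hj
    exact tendsto_of_tendsto_of_tendsto_of_le_of_le hmmconv hMconv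
      (fun n => hmr n j hj) (fun n => hrM n j hj)

/-- A nonzero subrectangular nonnegative matrix `G` with `G 0 0 > 0` has rescaled powers
`G^n / s_n` converging to a rank-one nonnegative matrix. -/
theorem stmt2 (m : ℕ) (G : Matrix (Fin (m + 1)) (Fin (m + 1)) ℝ)
    (hG : ∀ i j, 0 ≤ G i j)
    (R C : Set (Fin (m + 1))) (hsupp : ∀ i j, 0 < G i j ↔ i ∈ R ∧ j ∈ C)
    (h11 : 0 < G 0 0) :
    ∃ (c : ℕ → ℝ) (L : Matrix (Fin (m + 1)) (Fin (m + 1)) ℝ),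
      (∀ n, 0 < c n) ∧ (∀ i j, 0 ≤ L i j) ∧ L.rank = 1 ∧
      Tendsto (fun n => (c n)⁻¹ • G ^ n) atTop (nhds L) := by
  classical
  have hR0 : (0 : Fin (m + 1)) ∈ R := ((hsupp 0 0).1 h11).1
  have hC0 : (0 : Fin (m + 1)) ∈ C := ((hsupp 0 0).1 h11).2
  -- column ratios
  choose u hu0 huT using fun i => key G hG R C hsupp hR0 hC0 i
  -- transpose
  have hGt : ∀ i j, 0 ≤ Gᵀ i j := fun i j => hG j i
  have hsuppt : ∀ i j, 0 < Gᵀ i j ↔ i ∈ C ∧ j ∈ R := fun i j => (hsupp j i).trans and_comm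
  choose v hv0 hvT using fun j => key Gᵀ hGt C R hsuppt hC0 hR0 j
  have hT : ∀ (n : ℕ) (j k : Fin (m + 1)), (Gᵀ ^ (n + 1)) j k = (G ^ (n + 1)) k j := by
    intro n j k
    rw [← Matrix.transpose_pow]
    rfl
  have hvT0 : ∀ j, Tendsto (fun n => (G ^ (n + 1)) 0 j / (G ^ (n + 1)) 0 0) atTop (nhds (v j)) := by
    intro j
    have h := hvT j 0 hR0
    refine h.congr fun n => ?_
    rw [hT n j 0, hT n 0 0]
  have hcpos : ∀ n, 0 < (G ^ n) 0 0 := by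
    intro n
    induction n with
    | zero => simp
    | succ n ih =>
      rw [pow_succ, Matrix.mul_apply]
      exact Finset.sum_pos' (fun k _ => mul_nonneg (aux_nonneg hG n 0 k) (hG k 0))
        ⟨0, Finset.mem_univ 0, mul_pos ih h11⟩
  have hu0eq : u 0 = 1 := by
    refine tendsto_nhds_unique (huT 0 0 hC0) ?_
    have h : (fun n : ℕ => (G ^ (n + 1)) 0 0 / (G ^ (n + 1)) 0 0) = fun _ => (1 : ℝ) :=
      funext fun n => div_self (hcpos (n + 1)).ne'
    rw [h]
    exact tendsto_const_nhds
  have hv0eq : v 0 = 1 := by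
    refine tendsto_nhds_unique (hvT0 0) ?_
    have h : (fun n : ℕ => (G ^ (n + 1)) 0 0 / (G ^ (n + 1)) 0 0) = fun _ => (1 : ℝ) :=
      funext fun n => div_self (hcpos (n + 1)).ne'
    rw [h]
    exact tendsto_const_nhds
  have hentry : ∀ i j, Tendsto (fun n => (G ^ n) i j / (G ^ n) 0 0) atTop (nhds (u i * v j)) := by
    intro i j
    rw [show (fun n => (G ^ n) i j / (G ^ n) 0 0) =
      (fun n => (G ^ n) i j / (G ^ n) 0 0) from rfl, ← tendsto_add_atTop_iff_nat 1]
    by_cases hj : j ∈ C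
    · have h1 := (huT i j hj).mul (hvT0 j)
      refine h1.congr fun n => ?_
      have hd : (G ^ (n + 1)) 0 j ≠ 0 := (aux_pos hsupp hG hR0 hC0 n 0 hR0 j hj).ne'
      have hd0 : (G ^ (n + 1)) 0 0 ≠ 0 := (hcpos (n + 1)).ne'
      field_simp
    · have hz : ∀ k (n : ℕ), (G ^ (n + 1)) k j = 0 := fun k n => aux_colzero hsupp hG n k j hj
      have hvj : v j = 0 := by
        refine tendsto_nhds_unique (hvT0 j) ?_
        have h : (fun n : ℕ => (G ^ (n + 1)) 0 j / (G ^ (n + 1)) 0 0) = fun _ => (0 : ℝ) :=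
          funext fun n => by rw [hz 0 n, zero_div]
        rw [h]
        exact tendsto_const_nhds
      rw [hvj, mul_zero]
      have h : (fun n : ℕ => (G ^ (n + 1)) i j / (G ^ (n + 1)) 0 0) = fun _ => (0 : ℝ) :=
        funext fun n => by rw [hz i n, zero_div]
      rw [h]
      exact tendsto_const_nhds
  have hune : u ≠ 0 := by
    intro h
    have := congrFun h 0
    rw [hu0eq] at this
    exact one_ne_zero this
  refine ⟨fun n => (G ^ n) 0 0, Matrix.vecMulVec u v, hcpos, ?_, ?_, ?_⟩
  · intro i j
    rw [Matrix.vecMulVec_apply]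
    exact mul_nonneg (hu0 i) (hv0 j)
  · have hrange : LinearMap.range (Matrix.vecMulVec u v).mulVecLin = Submodule.span ℝ {u} := by
      apply le_antisymm
      · rintro x ⟨y, rfl⟩
        refine Submodule.mem_span_singleton.2 ⟨v ⬝ᵥ y, ?_⟩
        funext i
        show v ⬝ᵥ y * u i = (Matrix.vecMulVec u v).mulVec y i
        rw [Matrix.mulVec, dotProduct, dotProduct, Finset.sum_mul]
        refine Finset.sum_congr rfl fun j _ => ?_
        rw [Matrix.vecMulVec_apply]
        ring
      · rw [Submodule.span_le, Set.singleton_subset_iff]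
        refine ⟨Pi.single 0 1, ?_⟩
        funext i
        show (Matrix.vecMulVec u v).mulVec (Pi.single 0 1) i = u i
        rw [Matrix.mulVec, dotProduct, Finset.sum_eq_single 0]
        · rw [Matrix.vecMulVec_apply, hv0eq, Pi.single_eq_same]; ring
        · intro k _ hk
          rw [Pi.single_eq_of_ne hk, mul_zero]
        · intro h
          exact absurd (Finset.mem_univ 0) h
    rw [Matrix.rank, hrange, finrank_span_singleton hune]
  · refine tendsto_pi_nhds.2 ?_
    intro i
    refine tendsto_pi_nhds.2 ?_
    intro j
    simp only [Matrix.vecMulVec_apply]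
    refine (hentry i j).congr fun n => ?_
    rw [Matrix.smul_apply, smul_eq_mul, div_eq_inv_mul]

end PerronAux
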